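/- Under alternating gradient descent updates x^{t+1} = x^t + D A y^t with D symmetric positive definite, agent 1's total utility after T+1 updates satisfies sum_{t=0}^{T} ⟨x^{t+1} + x^t, A y^t⟩ = ⟨x^{T+1}, D^{-1} x^{T+1}⟩ - ⟨x^0, D^{-1} x^0⟩ ≥ -⟨x^0, D^{-1} x^0⟩. -/

import Mathlib

open Matrix Finset

theorem altGD_utility_identity {n m : ℕ}
    (D : Matrix (Fin n) (Fin n) ℝ) (hD : D.PosDef)
    (A : Matrix (Fin n) (Fin m) ℝ)
    (y : ℕ → Fin m → ℝ) (xs : ℕ → Fin n → ℝ)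
    (hupd : ∀ t, xs (t + 1) = xs t + D *ᵥ (A *ᵥ y t)) (T : ℕ) :
    (∑ t ∈ Finset.range (T + 1), (xs (t + 1) + xs t) ⬝ᵥ (A *ᵥ y t) =
      xs (T + 1) ⬝ᵥ (D⁻¹ *ᵥ xs (T + 1)) - xs 0 ⬝ᵥ (D⁻¹ *ᵥ xs 0)) ∧
    (-(xs 0 ⬝ᵥ (D⁻¹ *ᵥ xs 0)) ≤
      ∑ t ∈ Finset.range (T + 1), (xs (t + 1) + xs t) ⬝ᵥ (A *ᵥ y t)) := by
  have hdet : IsUnit D.det := isUnit_iff_ne_zero.mpr (ne_of_gt hD.det_pos)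
  have hsym : D⁻¹ᵀ = D⁻¹ := by
    rw [transpose_nonsing_inv]
    congr 1
    exact hD.isHermitian.eq
  have hcomm : ∀ a b : Fin n → ℝ, a ⬝ᵥ (D⁻¹ *ᵥ b) = b ⬝ᵥ (D⁻¹ *ᵥ a) := by
    intro a b
    rw [dotProduct_mulVec, ← mulVec_transpose, hsym, dotProduct_comm]
  have hterm : ∀ t, (xs (t + 1) + xs t) ⬝ᵥ (A *ᵥ y t) =
      xs (t + 1) ⬝ᵥ (D⁻¹ *ᵥ xs (t + 1)) - xs t ⬝ᵥ (D⁻¹ *ᵥ xs t) := by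
    intro t
    have h1 : A *ᵥ y t = D⁻¹ *ᵥ (xs (t + 1) - xs t) := by
      have : D *ᵥ (A *ᵥ y t) = xs (t + 1) - xs t := by
        rw [hupd t]; abel
      rw [← this, mulVec_mulVec, nonsing_inv_mul D hdet, one_mulVec]
    rw [h1, mulVec_sub, dotProduct_sub, add_dotProduct, add_dotProduct,
      hcomm (xs t) (xs (t+1))]
    ring
  have hsum : ∑ t ∈ Finset.range (T + 1), (xs (t + 1) + xs t) ⬝ᵥ (A *ᵥ y t) =
      xs (T + 1) ⬝ᵥ (D⁻¹ *ᵥ xs (T + 1)) - xs 0 ⬝ᵥ (D⁻¹ *ᵥ xs 0) := by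
    calc ∑ t ∈ Finset.range (T + 1), (xs (t + 1) + xs t) ⬝ᵥ (A *ᵥ y t)
        = ∑ t ∈ Finset.range (T + 1),
            (xs (t + 1) ⬝ᵥ (D⁻¹ *ᵥ xs (t + 1)) - xs t ⬝ᵥ (D⁻¹ *ᵥ xs t)) := by
          exact Finset.sum_congr rfl fun t _ => hterm t
      _ = _ := Finset.sum_range_sub (fun t => xs t ⬝ᵥ (D⁻¹ *ᵥ xs t)) (T + 1)
  refine ⟨hsum, ?_⟩
  rw [hsum]
  have hnn : 0 ≤ xs (T + 1) ⬝ᵥ (D⁻¹ *ᵥ xs (T + 1)) := by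
    have := hD.inv.posSemidef.dotProduct_mulVec_nonneg (xs (T + 1))
    simpa using this
  linarith
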